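/- Let m ≥ 6, q ≥ 2, and t ∈ {0,1,2} be integers, and set n = q(m+1) - t. Let H be the graph on n+m+1 vertices obtained as the join of a single vertex with the disjoint union of the complete graphs K_{2m-t-2}, K_{m+4}, and q-2 copies of K_{m+1}. Then H contains no cycle of length 2m, and the complement of H contains no subgraph isomorphic to K_{2,n}. -/

import Mathlib

/-- `G` contains a subgraph isomorphic to `H` (not necessarily induced),
i.e. there is an injective graph homomorphism from `H` to `G`. -/
def Contains {V W : Type*} (G : SimpleGraph V) (H : SimpleGraph W) : Prop :=
  ∃ f : H →g G, Function.Injective f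

/-- `G` contains a cycle of length `k`. -/
def HasCycleLength {V : Type*} (G : SimpleGraph V) (k : ℕ) : Prop :=
  ∃ (v : V) (c : G.Walk v v), c.IsCycle ∧ c.length = k

/-- The join of two graphs: their disjoint union together with all edges
between the two vertex sets. -/
def graphJoin {α β : Type*} (G : SimpleGraph α) (H : SimpleGraph β) :
    SimpleGraph (α ⊕ β) where
  Adj u v :=
    match u, v with
    | Sum.inl a, Sum.inl b => G.Adj a b
    | Sum.inr a, Sum.inr b => H.Adj a b
    | _, _ => True
  symm := ⟨by
    rintro (a | a) (b | b) h
    · exact G.symm.symm _ _ h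
    · trivial
    · trivial
    · exact H.symm.symm _ _ h⟩
  loopless := ⟨by
    rintro (a | a) h
    · exact G.loopless.irrefl a h
    · exact H.loopless.irrefl a h⟩

/-- The disjoint union of `p` copies of the complete graph `K_k`. -/
def cliqueCopies (p k : ℕ) : SimpleGraph (Fin p × Fin k) where
  Adj a b := a.1 = b.1 ∧ a ≠ b
  symm := ⟨fun _ _ h => ⟨h.1.symm, h.2.symm⟩⟩
  loopless := ⟨fun _ h => h.2 rfl⟩

section Aux

variable (m q t : ℕ)

/-- The vertex type of the construction. -/
abbrev ConsV := Fin 1 ⊕ (Fin (2 * m - t - 2) ⊕ (Fin (m + 4) ⊕ Fin (q - 2) × Fin (m + 1)))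

/-- The construction graph. -/
abbrev ConsG : SimpleGraph (ConsV m q t) :=
  graphJoin (⊤ : SimpleGraph (Fin 1))
    ((⊤ : SimpleGraph (Fin (2 * m - t - 2))) ⊕g
      ((⊤ : SimpleGraph (Fin (m + 4))) ⊕g cliqueCopies (q - 2) (m + 1)))

/-- Which clique a vertex belongs to (0 = the apex). -/
def partFn : ConsV m q t → ℕ
  | Sum.inl _ => 0
  | Sum.inr (Sum.inl _) => 1
  | Sum.inr (Sum.inr (Sum.inl _)) => 2
  | Sum.inr (Sum.inr (Sum.inr p)) => 3 + p.1

variable {m q t}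

lemma part_adj {u v : ConsV m q t} (h : (ConsG m q t).Adj u v)
    (hu : ∀ a, u ≠ Sum.inl a) (hv : ∀ a, v ≠ Sum.inl a) :
    partFn m q t u = partFn m q t v := by
  rcases u with a | u
  · exact absurd rfl (hu a)
  rcases v with b | v
  · exact absurd rfl (hv b)
  have h' : ((⊤ : SimpleGraph (Fin (2 * m - t - 2))) ⊕g
      ((⊤ : SimpleGraph (Fin (m + 4))) ⊕g cliqueCopies (q - 2) (m + 1))).Adj u v := h
  rcases u with u | (u | u) <;> rcases v with v | (v | v) <;>
    simp_all [SimpleGraph.sum_adj, partFn]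
  exact congrArg Fin.val (show u.1 = v.1 ∧ u ≠ v from h').1

lemma walk_part {u v : ConsV m q t} (p : (ConsG m q t).Walk u v)
    (hp : ∀ z ∈ p.support, ∀ a, z ≠ Sum.inl a) :
    ∀ z ∈ p.support, partFn m q t z = partFn m q t u := by
  induction p with
  | nil =>
    intro z hz
    rw [SimpleGraph.Walk.support_nil, List.mem_singleton] at hz
    rw [hz]
  | @cons u w v h p ih =>
    intro z hz
    rw [SimpleGraph.Walk.support_cons, List.mem_cons] at hz
    rcases hz with rfl | hz'
    · rfl
    · have hsub : ∀ z ∈ p.support, ∀ a, z ≠ Sum.inl a := by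
        intro z hz a
        exact hp z (by rw [SimpleGraph.Walk.support_cons]; exact List.mem_cons_of_mem _ hz) a
      have h1 := ih hsub z hz'
      have h2 := part_adj h
        (fun a => hp u (by rw [SimpleGraph.Walk.support_cons]; exact List.mem_cons_self) a)
        (fun a => hsub w p.start_mem_support a)
      rw [h1, ← h2]

lemma support_bound (hm : 6 ≤ m) {x y : ConsV m q t}
    (p : (ConsG m q t).Walk x y) (hnd : p.support.Nodup)
    (hp : ∀ z ∈ p.support, ∀ a, z ≠ Sum.inl a) :
    p.support.length ≤ 2 * m - 2 := by
  have hconst := walk_part p hp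
  have hcard : p.support.toFinset.card = p.support.length := by
    rw [List.card_toFinset, List.dedup_eq_self.mpr hnd]
  rcases x with a | (a | (a | pp))
  · exact absurd rfl (hp _ p.start_mem_support a)
  · -- all vertices in the first clique, of size 2m - t - 2
    have hsub : p.support.toFinset ⊆
        Finset.univ.image (fun w : Fin (2 * m - t - 2) => (Sum.inr (Sum.inl w) : ConsV m q t)) := by
      intro z hz
      have hz' := List.mem_toFinset.mp hz
      have hpz := hconst z hz'
      rcases z with b | (b | (b | b))
      · exact absurd rfl (hp _ hz' b)
      · exact Finset.mem_image.mpr ⟨b, Finset.mem_univ _, rfl⟩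
      · simp only [partFn] at hpz; omega
      · simp only [partFn] at hpz; omega
    have h1 := Finset.card_le_card hsub
    have h2 := Finset.card_image_le
      (s := (Finset.univ : Finset (Fin (2 * m - t - 2))))
      (f := fun w : Fin (2 * m - t - 2) => (Sum.inr (Sum.inl w) : ConsV m q t))
    rw [Finset.card_univ, Fintype.card_fin] at h2
    omega
  · -- all vertices in the second clique, of size m + 4
    have hsub : p.support.toFinset ⊆
        Finset.univ.image
          (fun w : Fin (m + 4) => (Sum.inr (Sum.inr (Sum.inl w)) : ConsV m q t)) := by
      intro z hz
      have hz' := List.mem_toFinset.mp hz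
      have hpz := hconst z hz'
      rcases z with b | (b | (b | b))
      · exact absurd rfl (hp _ hz' b)
      · simp only [partFn] at hpz; omega
      · exact Finset.mem_image.mpr ⟨b, Finset.mem_univ _, rfl⟩
      · simp only [partFn] at hpz; omega
    have h1 := Finset.card_le_card hsub
    have h2 := Finset.card_image_le
      (s := (Finset.univ : Finset (Fin (m + 4))))
      (f := fun w : Fin (m + 4) => (Sum.inr (Sum.inr (Sum.inl w)) : ConsV m q t))
    rw [Finset.card_univ, Fintype.card_fin] at h2
    omega
  · -- all vertices in the copy `pp.1` of `K_{m+1}`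
    have hsub : p.support.toFinset ⊆
        Finset.univ.image
          (fun w : Fin (m + 1) => (Sum.inr (Sum.inr (Sum.inr (pp.1, w))) : ConsV m q t)) := by
      intro z hz
      have hz' := List.mem_toFinset.mp hz
      have hpz := hconst z hz'
      rcases z with b | (b | (b | b))
      · exact absurd rfl (hp _ hz' b)
      · simp only [partFn] at hpz; omega
      · simp only [partFn] at hpz; omega
      · refine Finset.mem_image.mpr ⟨b.2, Finset.mem_univ _, ?_⟩
        simp only [partFn] at hpz
        have : b.1 = pp.1 := Fin.ext (by omega)
        rw [show (pp.1, b.2) = b from Prod.ext this.symm rfl]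
    have h1 := Finset.card_le_card hsub
    have h2 := Finset.card_image_le
      (s := (Finset.univ : Finset (Fin (m + 1))))
      (f := fun w : Fin (m + 1) => (Sum.inr (Sum.inr (Sum.inr (pp.1, w))) : ConsV m q t))
    rw [Finset.card_univ, Fintype.card_fin] at h2
    omega

end Aux


/-- For `m ≥ 6`, `q ≥ 2`, `t ∈ {0, 1, 2}` and `n = q(m+1) - t`, the join of a
single vertex with `K_{2m-t-2} ∪ K_{m+4} ∪ (q-2) · K_{m+1}` has no cycle of
length `2m`, and its complement contains no `K_{2,n}`. -/
theorem construction_two (m q t n : ℕ) (hm : 6 ≤ m) (hq : 2 ≤ q)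
    (ht : t ≤ 2) (hn : n = q * (m + 1) - t) :
    ¬ HasCycleLength
        (graphJoin (⊤ : SimpleGraph (Fin 1))
          ((⊤ : SimpleGraph (Fin (2 * m - t - 2))) ⊕g
            ((⊤ : SimpleGraph (Fin (m + 4))) ⊕g cliqueCopies (q - 2) (m + 1))))
        (2 * m) ∧
    ¬ Contains
        (graphJoin (⊤ : SimpleGraph (Fin 1))
          ((⊤ : SimpleGraph (Fin (2 * m - t - 2))) ⊕g
            ((⊤ : SimpleGraph (Fin (m + 4))) ⊕g cliqueCopies (q - 2) (m + 1))))ᶜ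
        (completeBipartiteGraph (Fin 2) (Fin n)) := by
  have hQ : 2 * (m + 1) ≤ q * (m + 1) := Nat.mul_le_mul_right _ hq
  have hR : (q - 2) * (m + 1) + 2 * (m + 1) = q * (m + 1) := by
    rw [← Nat.add_mul, Nat.sub_add_cancel hq]
  constructor
  · -- no cycle of length 2m
    rintro ⟨v, c, hcyc, hlen⟩
    classical
    have hclen : 0 < c.length := by omega
    rcases Classical.em ((Sum.inl (0 : Fin 1) : ConsV m q t) ∈ c.support) with h0 | h0
    · -- rotate the cycle to start at the apex
      have hcyc' : (c.rotate _ h0).IsCycle := hcyc.rotate h0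
      have hlen' : (c.rotate _ h0).length = 2 * m := by
        have := (c.rotate_darts _ h0).perm.length_eq
        rw [SimpleGraph.Walk.length_darts, SimpleGraph.Walk.length_darts] at this
        omega
      obtain ⟨w₁, h1, p, hpc⟩ :
          ∃ (w₁ : ConsV m q t) (h1 : (ConsG m q t).Adj (Sum.inl 0) w₁)
            (p : (ConsG m q t).Walk w₁ (Sum.inl 0)),
              c.rotate _ h0 = SimpleGraph.Walk.cons h1 p := by
        rcases hc : c.rotate _ h0 with _ | ⟨h1, p⟩
        · rw [hc] at hlen'; simp at hlen'; omega
        · exact ⟨_, h1, p, rfl⟩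
      have hpnd : p.support.Nodup := by
        have := hcyc'.support_nodup
        rw [hpc, SimpleGraph.Walk.support_cons, List.tail_cons] at this
        exact this
      have hplen : p.length + 1 = 2 * m := by
        rw [hpc, SimpleGraph.Walk.length_cons] at hlen'; omega
      -- strip the final apex from p by reversing
      have hne : (Sum.inl 0 : ConsV m q t) ≠ w₁ := h1.ne
      obtain ⟨x, h2, qq, hqq⟩ := SimpleGraph.Walk.exists_eq_cons_of_ne hne p.reverse
      have hsupp : p.support.reverse = Sum.inl 0 :: qq.support := by
        rw [← SimpleGraph.Walk.support_reverse, hqq, SimpleGraph.Walk.support_cons]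
      have hqnd : (Sum.inl 0 :: qq.support).Nodup := by
        rw [← hsupp]; exact List.nodup_reverse.mpr hpnd
      have hq0 : (Sum.inl 0 : ConsV m q t) ∉ qq.support := (List.nodup_cons.mp hqnd).1
      have hqnodup : qq.support.Nodup := (List.nodup_cons.mp hqnd).2
      have hqfree : ∀ z ∈ qq.support, ∀ a : Fin 1, z ≠ Sum.inl a := by
        intro z hz a hza
        have : a = 0 := Subsingleton.elim a 0
        rw [hza, this] at hz
        exact hq0 hz
      have hqlen : qq.support.length = 2 * m - 1 := by
        have := congrArg List.length hsupp
        rw [List.length_reverse, SimpleGraph.Walk.length_support] at this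
        rw [List.length_cons] at this
        have hrl : p.reverse.length = p.length := SimpleGraph.Walk.length_reverse p
        have : qq.support.length = p.length := by omega
        omega
      have := support_bound hm qq hqnodup hqfree
      omega
    · -- the apex is not on the cycle
      obtain ⟨w₁, h1, p, hpc⟩ :
          ∃ (w₁ : ConsV m q t) (h1 : (ConsG m q t).Adj v w₁)
            (p : (ConsG m q t).Walk w₁ v), c = SimpleGraph.Walk.cons h1 p := by
        rcases hc : c with _ | ⟨h1, p⟩
        · rw [hc] at hlen; simp at hlen; omega
        · exact ⟨_, h1, p, rfl⟩
      have hpnd : p.support.Nodup := by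
        have := hcyc.support_nodup
        rw [hpc, SimpleGraph.Walk.support_cons, List.tail_cons] at this
        exact this
      have hpfree : ∀ z ∈ p.support, ∀ a : Fin 1, z ≠ Sum.inl a := by
        intro z hz a hza
        have ha : a = 0 := Subsingleton.elim a 0
        apply h0
        rw [← ha, ← hza]
        rw [hpc, SimpleGraph.Walk.support_cons]
        exact List.mem_cons_of_mem _ hz
      have hplen : p.support.length = 2 * m := by
        rw [SimpleGraph.Walk.length_support]
        rw [hpc, SimpleGraph.Walk.length_cons] at hlen
        omega
      have := support_bound hm p hpnd hpfree
      omega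
  · -- no K_{2,n} in the complement
    rintro ⟨f, hf⟩
    have hn1 : 1 ≤ n := by
      have key : ∀ Q : ℕ, 2 * (m + 1) ≤ Q → n = Q - t → 1 ≤ n := by
        intro Q h1 h2; omega
      exact key _ hQ hn
    have hadj : ∀ j : Fin n,
        ((ConsG m q t)ᶜ).Adj (f (Sum.inl 0)) (f (Sum.inr j)) := by
      intro j
      exact f.map_adj (by simp)
    rcases hx : f (Sum.inl 0) with a | (a | (b | pp))
    · -- the apex has no neighbours in the complement
      have h := hadj ⟨0, hn1⟩
      rw [hx, SimpleGraph.compl_adj] at h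
      obtain ⟨hne, hnadj⟩ := h
      rcases hy : f (Sum.inr ⟨0, hn1⟩) with b | w
      · rw [hy] at hne
        exact hne (by rw [Subsingleton.elim a b])
      · rw [hy] at hnadj
        exact hnadj trivial
    · -- the first vertex lies in K_{2m-t-2}
      have hext : ∀ j : Fin n, ∃ w, f (Sum.inr j) = Sum.inr (Sum.inr w) := by
        intro j
        have h := hadj j
        rw [hx, SimpleGraph.compl_adj] at h
        obtain ⟨hne, hnadj⟩ := h
        rcases hy : f (Sum.inr j) with b | (b | w)
        · rw [hy] at hnadj; exact absurd trivial hnadj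
        · rw [hy] at hne hnadj
          have hab : a ≠ b := fun hab => hne (by rw [hab])
          exact absurd (show (ConsG m q t).Adj (Sum.inr (Sum.inl a)) (Sum.inr (Sum.inl b)) from hab) hnadj
        · exact ⟨w, rfl⟩
      choose g hg using hext
      have hginj : Function.Injective g := by
        intro j₁ j₂ hj
        have : f (Sum.inr j₁) = f (Sum.inr j₂) := by rw [hg j₁, hg j₂, hj]
        exact Sum.inr_injective (hf this)
      have hcard := Fintype.card_le_of_injective g hginj
      simp only [Fintype.card_fin, Fintype.card_sum, Fintype.card_prod] at hcard
      have key : ∀ Q R : ℕ, R + 2 * (m + 1) = Q → n = Q - t →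
          n ≤ m + 4 + (q - 2) * (m + 1) → (q - 2) * (m + 1) = R → False := by
        intro Q R h1 h2 h3 h4; rw [h4] at h3; omega
      exact key _ _ hR hn hcard rfl
    · -- the first vertex lies in K_{m+4}
      have hext : ∀ j : Fin n,
          ∃ w : Fin (2 * m - t - 2) ⊕ Fin (q - 2) × Fin (m + 1),
            f (Sum.inr j) = Sum.elim (fun u => Sum.inr (Sum.inl u))
              (fun u => Sum.inr (Sum.inr (Sum.inr u))) w := by
        intro j
        have h := hadj j
        rw [hx, SimpleGraph.compl_adj] at h
        obtain ⟨hne, hnadj⟩ := h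
        rcases hy : f (Sum.inr j) with c | (c | (c | c))
        · rw [hy] at hnadj; exact absurd trivial hnadj
        · exact ⟨Sum.inl c, rfl⟩
        · rw [hy] at hne hnadj
          have hab : b ≠ c := fun hab => hne (by rw [hab])
          exact absurd (show (ConsG m q t).Adj (Sum.inr (Sum.inr (Sum.inl b)))
            (Sum.inr (Sum.inr (Sum.inl c))) from hab) hnadj
        · exact ⟨Sum.inr c, rfl⟩
      choose g hg using hext
      have hginj : Function.Injective g := by
        intro j₁ j₂ hj
        have : f (Sum.inr j₁) = f (Sum.inr j₂) := by rw [hg j₁, hg j₂, hj]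
        exact Sum.inr_injective (hf this)
      have hcard := Fintype.card_le_of_injective g hginj
      simp only [Fintype.card_fin, Fintype.card_sum, Fintype.card_prod] at hcard
      have key : ∀ Q R : ℕ, R + 2 * (m + 1) = Q → n = Q - t →
          n ≤ 2 * m - t - 2 + (q - 2) * (m + 1) → (q - 2) * (m + 1) = R → False := by
        intro Q R h1 h2 h3 h4; rw [h4] at h3; omega
      exact key _ _ hR hn hcard rfl
    · -- the first vertex lies in one of the copies of K_{m+1}
      have hq3 : 3 ≤ q := by
        have := pp.1.2
        omega
      have hR3 : (q - 3) * (m + 1) + 3 * (m + 1) = q * (m + 1) := by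
        rw [← Nat.add_mul, Nat.sub_add_cancel hq3]
      have hext : ∀ j : Fin n,
          ∃ w : Fin (2 * m - t - 2) ⊕ (Fin (m + 4) ⊕ {r : Fin (q - 2) // r ≠ pp.1} × Fin (m + 1)),
            f (Sum.inr j) = Sum.elim (fun u => Sum.inr (Sum.inl u))
              (Sum.elim (fun u => Sum.inr (Sum.inr (Sum.inl u)))
                (fun u => Sum.inr (Sum.inr (Sum.inr (u.1.1, u.2))))) w := by
        intro j
        have h := hadj j
        rw [hx, SimpleGraph.compl_adj] at h
        obtain ⟨hne, hnadj⟩ := h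
        rcases hy : f (Sum.inr j) with c | (c | (c | c))
        · rw [hy] at hnadj; exact absurd trivial hnadj
        · exact ⟨Sum.inl c, rfl⟩
        · exact ⟨Sum.inr (Sum.inl c), rfl⟩
        · rw [hy] at hne hnadj
          have hcne : pp ≠ c := fun hpc => hne (by rw [hpc])
          have hfst : c.1 ≠ pp.1 := by
            intro hfst
            exact hnadj (show (ConsG m q t).Adj (Sum.inr (Sum.inr (Sum.inr pp)))
              (Sum.inr (Sum.inr (Sum.inr c))) from (show pp.1 = c.1 ∧ pp ≠ c from ⟨hfst.symm, hcne⟩))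
          exact ⟨Sum.inr (Sum.inr (⟨c.1, hfst⟩, c.2)), rfl⟩
      choose g hg using hext
      have hginj : Function.Injective g := by
        intro j₁ j₂ hj
        have h1 : f (Sum.inr j₁) = f (Sum.inr j₂) := by rw [hg j₁, hg j₂, hj]
        exact Sum.inr_injective (hf h1)
      have hcard := Fintype.card_le_of_injective g hginj
      have hsc : Fintype.card {r : Fin (q - 2) // r ≠ pp.1} = q - 2 - 1 := by
        have h := Fintype.card_subtype_compl (fun r : Fin (q - 2) => r = pp.1)
        rw [Fintype.card_subtype_eq, Fintype.card_fin] at h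
        exact h
      simp only [Fintype.card_fin, Fintype.card_sum, Fintype.card_prod, hsc] at hcard
      have key : ∀ Q R : ℕ, R + 3 * (m + 1) = Q → n = Q - t →
          n ≤ 2 * m - t - 2 + (m + 4 + (q - 3) * (m + 1)) →
          (q - 3) * (m + 1) = R → False := by
        intro Q R h1 h2 h3 h4; rw [h4] at h3; omega
      refine key _ _ hR3 hn ?_ rfl
      have : q - 2 - 1 = q - 3 := by omega
      rw [← this]
      exact hcard
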